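/- With the data of the multiply warped example (k ≥ 2; positive integers r₁,…,r_k; n, C, L, ε, I; functions h₁,…,h_k as defined), for all 1 ≤ i, j ≤ k and every s ∈ I one has h_i''(s)/h_i(s) − h_j''(s)/h_j(s) = ((i − j)/(n − 1))·((n − 1)·(i + j) − 2C + 2L·tan(Ls)); in particular, for i ≠ j the function h_i''/h_i − h_j''/h_j does not vanish identically on I. -/

import Mathlib

noncomputable def F1 (L b a : ℝ) : ℝ → ℝ := fun t =>
  Real.exp (a*t) * (a * Real.cos (L*t) ^ (-b)
    + (b*L) * (Real.sin (L*t) * Real.cos (L*t) ^ (-b-1)))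

noncomputable def F2 (L b a : ℝ) : ℝ → ℝ := fun t =>
  Real.exp (a*t) * ((a^2 + b*L^2) * Real.cos (L*t) ^ (-b)
    + (2*a*b*L) * (Real.sin (L*t) * Real.cos (L*t) ^ (-b-1))
    + (b*(b+1)*L^2) * (Real.sin (L*t)^2 * Real.cos (L*t) ^ (-b-1-1)))

lemma auxD1 (L b a s : ℝ) (hc : 0 < Real.cos (L*s)) :
    HasDerivAt (fun t => Real.exp (a*t) * Real.cos (L*t) ^ (-b)) (F1 L b a s) s := by
  have he : HasDerivAt (fun t : ℝ => Real.exp (a*t)) (Real.exp (a*s) * (a*1)) s :=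
    ((hasDerivAt_id s).const_mul a).exp
  have hcd : HasDerivAt (fun t : ℝ => Real.cos (L*t)) (-Real.sin (L*s) * (L*1)) s :=
    ((hasDerivAt_id s).const_mul L).cos
  have hr := hcd.rpow_const (p := -b) (Or.inl hc.ne')
  have := he.mul hr
  refine HasDerivAt.congr_deriv this ?_
  simp only [F1]
  ring

lemma auxD2 (L b a s : ℝ) (hc : 0 < Real.cos (L*s)) :
    HasDerivAt (F1 L b a) (F2 L b a s) s := by
  have he : HasDerivAt (fun t : ℝ => Real.exp (a*t)) (Real.exp (a*s) * (a*1)) s :=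
    ((hasDerivAt_id s).const_mul a).exp
  have hcd : HasDerivAt (fun t : ℝ => Real.cos (L*t)) (-Real.sin (L*s) * (L*1)) s :=
    ((hasDerivAt_id s).const_mul L).cos
  have hsd : HasDerivAt (fun t : ℝ => Real.sin (L*t)) (Real.cos (L*s) * (L*1)) s :=
    ((hasDerivAt_id s).const_mul L).sin
  have hP0 := hcd.rpow_const (p := -b) (Or.inl hc.ne')
  have hP1 := hcd.rpow_const (p := -b-1) (Or.inl hc.ne')
  have hg := ((hP0.const_mul a).add ((hsd.mul hP1).const_mul (b*L)))
  have := he.mul hg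
  refine HasDerivAt.congr_deriv this ?_
  have e1 : Real.cos (L*s) ^ (-b) = Real.cos (L*s) * Real.cos (L*s) ^ (-b-1) := by
    have h2 := Real.rpow_add hc 1 (-b-1)
    rw [Real.rpow_one] at h2
    rw [← h2]
    congr 1
    ring
  simp only [F2, Pi.add_apply, Pi.mul_apply]
  rw [e1]
  ring

lemma auxRatio (L b a s : ℝ) (hc : 0 < Real.cos (L*s)) :
    F2 L b a s / (Real.exp (a*s) * Real.cos (L*s) ^ (-b))
      = a^2 + b*L^2 + 2*a*b*L*Real.tan (L*s) + b*(b+1)*L^2*Real.tan (L*s)^2 := by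
  have hc0 : Real.cos (L*s) ≠ 0 := hc.ne'
  have hP0 : (0:ℝ) < Real.cos (L*s) ^ (-b) := Real.rpow_pos_of_pos hc _
  have e1 : Real.cos (L*s) ^ (-b-1) = Real.cos (L*s) ^ (-b) / Real.cos (L*s) := by
    rw [eq_div_iff hc0]
    have h2 := Real.rpow_add hc (-b-1) 1
    rw [Real.rpow_one] at h2
    rw [← h2]
    congr 1
    ring
  have e2 : Real.cos (L*s) ^ (-b-1-1) = Real.cos (L*s) ^ (-b) / Real.cos (L*s)^2 := by
    rw [eq_div_iff (pow_ne_zero 2 hc0)]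
    have h2 := Real.rpow_add hc (-b-1-1) 2
    have h3 : Real.cos (L*s) ^ (2:ℝ) = Real.cos (L*s) ^ (2:ℕ) := by
      rw [← Real.rpow_natCast]
      norm_num
    rw [h3] at h2
    rw [← h2]
    congr 1
    ring
  simp only [F2]
  rw [e1, e2, Real.tan_eq_sin_div_cos]
  have hP0ne : Real.cos (s*L) ^ (-b) ≠ 0 := by rw [mul_comm]; exact hP0.ne'
  have hc0' : Real.cos (s*L) ≠ 0 := by rw [mul_comm]; exact hc0
  field_simp

/-- In the multiply warped example, for all 1 ≤ i, j ≤ k and s ∈ I,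
h_i''/h_i − h_j''/h_j = ((i − j)/(n − 1))·((n − 1)·(i + j) − 2C + 2L·tan(Ls));
in particular for i ≠ j the function h_i''/h_i − h_j''/h_j does not vanish
identically on I. -/
theorem stmt_15 (k : ℕ) (hk : 2 ≤ k) (r : ℕ → ℕ)
    (hr : ∀ j ∈ Finset.Icc 1 k, 0 < r j)
    (n : ℕ) (hn : n = (∑ j ∈ Finset.Icc 1 k, r j) + 1)
    (C L ε : ℝ) (hC : C = ∑ j ∈ Finset.Icc 1 k, (r j : ℝ) * (j : ℝ))
    (hL2 : 0 < ((n : ℝ) - 1) * (∑ j ∈ Finset.Icc 1 k, (r j : ℝ) * (j : ℝ) ^ 2) - C ^ 2)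
    (hL : L = Real.sqrt
      (((n : ℝ) - 1) * (∑ j ∈ Finset.Icc 1 k, (r j : ℝ) * (j : ℝ) ^ 2) - C ^ 2))
    (hε : ε = Real.pi / (2 * L))
    (h : ℕ → ℝ → ℝ)
    (hh : ∀ i ∈ Finset.Icc 1 k, ∀ s ∈ Set.Ioo (-ε) ε,
      h i s = Real.exp (((i : ℝ) - C / ((n : ℝ) - 1)) * s)
        * Real.cos (L * s) ^ (-(1 / ((n : ℝ) - 1)))) :
    (∀ i ∈ Finset.Icc 1 k, ∀ j ∈ Finset.Icc 1 k, ∀ s ∈ Set.Ioo (-ε) ε,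
      deriv (deriv (h i)) s / h i s - deriv (deriv (h j)) s / h j s
        = (((i : ℝ) - (j : ℝ)) / ((n : ℝ) - 1))
          * (((n : ℝ) - 1) * ((i : ℝ) + (j : ℝ)) - 2 * C + 2 * L * Real.tan (L * s))) ∧
    (∀ i ∈ Finset.Icc 1 k, ∀ j ∈ Finset.Icc 1 k, i ≠ j →
      ¬ ∀ s ∈ Set.Ioo (-ε) ε,
        deriv (deriv (h i)) s / h i s - deriv (deriv (h j)) s / h j s = 0) := by
  have h1mem : 1 ∈ Finset.Icc 1 k := Finset.mem_Icc.mpr ⟨le_refl 1, by omega⟩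
  have hsum : 1 ≤ ∑ j ∈ Finset.Icc 1 k, r j :=
    le_trans (hr 1 h1mem) (Finset.single_le_sum (fun i _ => Nat.zero_le _) h1mem)
  have hn2 : 2 ≤ n := by omega
  have hNpos : (0:ℝ) < (n:ℝ) - 1 := by
    have : (2:ℝ) ≤ (n:ℝ) := by exact_mod_cast hn2
    linarith
  have hNne : ((n:ℝ) - 1) ≠ 0 := hNpos.ne'
  have hLpos : 0 < L := by rw [hL]; exact Real.sqrt_pos.mpr hL2
  have hεpos : 0 < ε := by
    rw [hε]; exact div_pos Real.pi_pos (by linarith)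
  have hLε : L * ε = Real.pi / 2 := by
    rw [hε]; field_simp
  have hcos : ∀ s ∈ Set.Ioo (-ε) ε, 0 < Real.cos (L*s) := by
    intro s hs
    apply Real.cos_pos_of_mem_Ioo
    constructor
    · have := mul_pos hLpos (show (0:ℝ) < s + ε by linarith [hs.1])
      nlinarith
    · have := mul_pos hLpos (show (0:ℝ) < ε - s by linarith [hs.2])
      nlinarith
  have hU : IsOpen (Set.Ioo (-ε) ε) := isOpen_Ioo
  -- second derivative formula
  have key : ∀ i ∈ Finset.Icc 1 k, ∀ s ∈ Set.Ioo (-ε) ε,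
      deriv (deriv (h i)) s
        = F2 L (1/((n:ℝ)-1)) ((i:ℝ) - C/((n:ℝ)-1)) s := by
    intro i hi s hs
    have hd1 : ∀ x ∈ Set.Ioo (-ε) ε,
        deriv (h i) x = F1 L (1/((n:ℝ)-1)) ((i:ℝ) - C/((n:ℝ)-1)) x := by
      intro x hx
      have hev : h i =ᶠ[nhds x]
          fun t => Real.exp (((i:ℝ) - C/((n:ℝ)-1))*t)
            * Real.cos (L*t) ^ (-(1/((n:ℝ)-1))) := by
        filter_upwards [hU.mem_nhds hx] with y hy using hh i hi y hy
      rw [hev.deriv_eq]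
      exact (auxD1 L (1/((n:ℝ)-1)) ((i:ℝ) - C/((n:ℝ)-1)) x (hcos x hx)).deriv
    have hev2 : deriv (h i) =ᶠ[nhds s] F1 L (1/((n:ℝ)-1)) ((i:ℝ) - C/((n:ℝ)-1)) := by
      filter_upwards [hU.mem_nhds hs] with y hy using hd1 y hy
    rw [hev2.deriv_eq]
    exact (auxD2 L (1/((n:ℝ)-1)) ((i:ℝ) - C/((n:ℝ)-1)) s (hcos s hs)).deriv
  have ratio : ∀ i ∈ Finset.Icc 1 k, ∀ s ∈ Set.Ioo (-ε) ε,
      deriv (deriv (h i)) s / h i s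
        = ((i:ℝ) - C/((n:ℝ)-1))^2 + (1/((n:ℝ)-1))*L^2
          + 2*((i:ℝ) - C/((n:ℝ)-1))*(1/((n:ℝ)-1))*L*Real.tan (L*s)
          + (1/((n:ℝ)-1))*((1/((n:ℝ)-1))+1)*L^2*Real.tan (L*s)^2 := by
    intro i hi s hs
    rw [key i hi s hs, hh i hi s hs]
    exact auxRatio L (1/((n:ℝ)-1)) ((i:ℝ) - C/((n:ℝ)-1)) s (hcos s hs)
  have main1 : ∀ i ∈ Finset.Icc 1 k, ∀ j ∈ Finset.Icc 1 k, ∀ s ∈ Set.Ioo (-ε) ε,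
      deriv (deriv (h i)) s / h i s - deriv (deriv (h j)) s / h j s
        = (((i : ℝ) - (j : ℝ)) / ((n : ℝ) - 1))
          * (((n : ℝ) - 1) * ((i : ℝ) + (j : ℝ)) - 2 * C + 2 * L * Real.tan (L * s)) := by
    intro i hi j hj s hs
    rw [ratio i hi s hs, ratio j hj s hs]
    field_simp
    ring
  refine ⟨main1, ?_⟩
  intro i hi j hj hij hall
  have h0 : (0:ℝ) ∈ Set.Ioo (-ε) ε := ⟨by linarith, hεpos⟩
  have h1 : ε/2 ∈ Set.Ioo (-ε) ε := ⟨by linarith, by linarith⟩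
  have e0 := hall 0 h0
  have e1 := hall (ε/2) h1
  rw [main1 i hi j hj 0 h0] at e0
  rw [main1 i hi j hj (ε/2) h1] at e1
  rw [mul_zero, Real.tan_zero] at e0
  have hq : L * (ε/2) = Real.pi / 4 := by
    rw [hε]; field_simp; ring
  rw [hq, Real.tan_pi_div_four] at e1
  have hij' : ((i:ℝ) - (j:ℝ)) ≠ 0 := sub_ne_zero.mpr (by exact_mod_cast hij)
  have hfac : ((i:ℝ) - (j:ℝ)) / ((n:ℝ) - 1) ≠ 0 := div_ne_zero hij' hNne
  have A0 : ((n:ℝ) - 1) * ((i:ℝ) + (j:ℝ)) - 2 * C + 2 * L * 0 = 0 :=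
    (mul_eq_zero.mp e0).resolve_left hfac
  have A1 : ((n:ℝ) - 1) * ((i:ℝ) + (j:ℝ)) - 2 * C + 2 * L * 1 = 0 :=
    (mul_eq_zero.mp e1).resolve_left hfac
  have : L = 0 := by linarith
  exact hLpos.ne' this
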